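/- (Ř-symmetry of the generalised nested monodromy matrix.) Let m ≥ 2 and let A(v) be an n×n matrix with entries in 𝒜 ⊗ ℂ(v, w₁,…,w_m, u₁,…,u_m, ρ). On V_a ⊗ ⊗_{i=1}^m (V_{ã_i} ⊗ V_{a_i}), all factors copies of ℂⁿ, define S⁽¹⁾_a(v; w, u) = ( ∏_{i=1}^m r^t_{ã_i a}(u_i−v) ) ( ∏_{i=1}^m r^t_{a_i a}(w_i−v) ) A_a(v) ( ∏_{i=m}^{1} r^t_{a_i a}(w̃_i−v+ε) ) ( ∏_{i=m}^{1} r^t_{ã_i a}(ũ_i−v+ε) ), where r^t(w) = I − Q/w, ũ_i = κ−u_i−ρ, w̃_i = κ−w_i−ρ, and A_a acts as A(v) on V_a and as the identity elsewhere. Then: (i) Ř(u)(e₁ ⊗ e₁) = e₁ ⊗ e₁; (ii) for 1 ≤ i ≤ m−1, Ř_{ã_i ã_{i+1}}(u_{i+1}−u_i) S⁽¹⁾_a(v; w, u) = S⁽¹⁾_a(v; w, u_{i↔i+1}) Ř_{ã_i ã_{i+1}}(u_{i+1}−u_i), where u_{i↔i+1} denotes the tuple with u_i and u_{i+1} interchanged;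 and (iii) for 1 ≤ i ≤ m−1, Ř_{a_i a_{i+1}}(w_{i+1}−w_i) S⁽¹⁾_a(v; w, u) = S⁽¹⁾_a(v; w_{i↔i+1}, u) Ř_{a_i a_{i+1}}(w_{i+1}−w_i). -/

import Mathlib

open Matrix
set_option linter.unusedSectionVars false
set_option linter.unreachableTactic false
set_option linter.unusedTactic false
set_option maxHeartbeats 1000000


noncomputable section

def kap (n : ℕ) (ε : ℂ) : ℂ := (n : ℂ) - ε

section Defs

variable (n m : ℕ) {A : Type*} [Ring A] [Algebra ℂ A]

/-- permutation operator `P` on `ℂⁿ ⊗ ℂⁿ` -/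
def PnA : Matrix (Fin n × Fin n) (Fin n × Fin n) A :=
  Matrix.of fun p q => if p.1 = q.2 ∧ p.2 = q.1 then 1 else 0

/-- orthogonal-type `Q` on `ℂⁿ ⊗ ℂⁿ` -/
def QnA : Matrix (Fin n × Fin n) (Fin n × Fin n) A :=
  Matrix.of fun p q => if p.2 = p.1.rev ∧ q.2 = q.1.rev then 1 else 0

/-- the Yang R-matrix `R(u) = I - P/u` -/
def RyA (u : ℂ) : Matrix (Fin n × Fin n) (Fin n × Fin n) A :=
  (1 : Matrix (Fin n × Fin n) (Fin n × Fin n) A) - u⁻¹ • PnA n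

/-- its partial transpose in the first factor, `r^t(w) = I - Q/w` -/
def RtA (w : ℂ) : Matrix (Fin n × Fin n) (Fin n × Fin n) A :=
  (1 : Matrix (Fin n × Fin n) (Fin n × Fin n) A) - w⁻¹ • QnA n

/-- `Ř(w) = (w/(w-1)) P R(w)` -/
def RcheckA (w : ℂ) : Matrix (Fin n × Fin n) (Fin n × Fin n) A :=
  (w / (w - 1)) • (PnA n * RyA n w)

/-- The index type of `V_a ⊗ ⊗_{i=1}^m (V_{ã_i} ⊗ V_{a_i})`: the first component is
the `V_a`-component, then the `V_{ã_i}`-components, then the `V_{a_i}`-components. -/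
abbrev NIdx (n m : ℕ) := Fin n × (Fin m → Fin n) × (Fin m → Fin n)

/-- single-site operator acting on the factor `V_a` -/
def onA (M : Matrix (Fin n) (Fin n) A) : Matrix (NIdx n m) (NIdx n m) A :=
  Matrix.of fun p q => M p.1 q.1 * (if p.2 = q.2 then 1 else 0)

/-- two-site operator acting on the factors `(ã_i, a)` -/
def onTA (i : Fin m) (M : Matrix (Fin n × Fin n) (Fin n × Fin n) A) :
    Matrix (NIdx n m) (NIdx n m) A :=
  Matrix.of fun p q =>
    M (p.2.1 i, p.1) (q.2.1 i, q.1) *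
      (if p.2.2 = q.2.2 ∧ (∀ j, j ≠ i → p.2.1 j = q.2.1 j) then 1 else 0)

/-- two-site operator acting on the factors `(a_i, a)` -/
def onSA (i : Fin m) (M : Matrix (Fin n × Fin n) (Fin n × Fin n) A) :
    Matrix (NIdx n m) (NIdx n m) A :=
  Matrix.of fun p q =>
    M (p.2.2 i, p.1) (q.2.2 i, q.1) *
      (if p.2.1 = q.2.1 ∧ (∀ j, j ≠ i → p.2.2 j = q.2.2 j) then 1 else 0)

/-- two-site operator acting on the factors `(ã_i, ã_{i'})` -/
def onTT (i i' : Fin m) (M : Matrix (Fin n × Fin n) (Fin n × Fin n) A) :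
    Matrix (NIdx n m) (NIdx n m) A :=
  Matrix.of fun p q =>
    M (p.2.1 i, p.2.1 i') (q.2.1 i, q.2.1 i') *
      (if p.1 = q.1 ∧ p.2.2 = q.2.2 ∧ (∀ j, j ≠ i → j ≠ i' → p.2.1 j = q.2.1 j)
        then 1 else 0)

/-- two-site operator acting on the factors `(a_i, a_{i'})` -/
def onSS (i i' : Fin m) (M : Matrix (Fin n × Fin n) (Fin n × Fin n) A) :
    Matrix (NIdx n m) (NIdx n m) A :=
  Matrix.of fun p q =>
    M (p.2.2 i, p.2.2 i') (q.2.2 i, q.2.2 i') *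
      (if p.1 = q.1 ∧ p.2.1 = q.2.1 ∧ (∀ j, j ≠ i → j ≠ i' → p.2.2 j = q.2.2 j)
        then 1 else 0)

/-- the generalised nested monodromy matrix `S⁽¹⁾(v; w, u)` -/
def nestS (ε ρ : ℂ) (Am : ℂ → Matrix (Fin n) (Fin n) A) (v : ℂ) (w u : Fin m → ℂ) :
    Matrix (NIdx n m) (NIdx n m) A :=
  ((List.finRange m).map fun i => onTA n m i (RtA n (u i - v))).prod *
  ((List.finRange m).map fun i => onSA n m i (RtA n (w i - v))).prod *
  onA n m (Am v) *
  ((List.finRange m).reverse.map fun i =>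
    onSA n m i (RtA n ((kap n ε - w i - ρ) - v + ε))).prod *
  ((List.finRange m).reverse.map fun i =>
    onTA n m i (RtA n ((kap n ε - u i - ρ) - v + ε))).prod

end Defs

/- ===== AUX ===== -/

section Helpers
variable {A : Type*} [Ring A] [Algebra ℂ A]

lemma ite10_mul_ite10 (c d : Prop) [Decidable c] [Decidable d] :
    (if c then (1:A) else 0) * (if d then 1 else 0) = if c ∧ d then 1 else 0 := by
  by_cases hc : c <;> by_cases hd : d <;> simp [hc, hd]

lemma commute_ite10 (c : Prop) [Decidable c] (a : A) :
    Commute (if c then (1:A) else 0) a := by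
  rcases ite_eq_or_eq c (1:A) 0 with h | h <;> rw [h] <;> simp [Commute, SemiconjBy]

lemma ite10_congr {c d : Prop} [Decidable c] [Decidable d] (h : c ↔ d) :
    (if c then (1:A) else 0) = if d then 1 else 0 := by
  by_cases hc : c <;> simp [hc, h.symm, (h.not).symm]

end Helpers

section Three
variable (n : ℕ) {A : Type*} [Ring A] [Algebra ℂ A]

abbrev X3 (n : ℕ) := Fin n × Fin n × Fin n

def p12 : Matrix (X3 n) (X3 n) A :=
  Matrix.of fun x y => if y = (x.2.1, x.1, x.2.2) then 1 else 0

def q13 : Matrix (X3 n) (X3 n) A :=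
  Matrix.of fun x y => if x.2.2 = x.1.rev ∧ y.2.2 = y.1.rev ∧ x.2.1 = y.2.1 then 1 else 0

def q23 : Matrix (X3 n) (X3 n) A :=
  Matrix.of fun x y => if x.2.2 = x.2.1.rev ∧ y.2.2 = y.2.1.rev ∧ x.1 = y.1 then 1 else 0

lemma p12_mul (M : Matrix (X3 n) (X3 n) A) :
    p12 n * M = Matrix.of fun x y => M (x.2.1, x.1, x.2.2) y := by
  ext x y
  simp [Matrix.mul_apply, p12, ite_mul]

lemma mul_p12 (M : Matrix (X3 n) (X3 n) A) :
    M * p12 n = Matrix.of fun x y => M x (y.2.1, y.1, y.2.2) := by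
  ext x y
  have : ∀ r : X3 n, (p12 n (A := A)) r y = if r = (y.2.1, y.1, y.2.2) then 1 else 0 := by
    intro r
    refine ite10_congr ?_
    constructor
    · rintro rfl; rfl
    · rintro rfl; rfl
  simp only [Matrix.mul_apply, this, mul_ite, mul_one, mul_zero]
  simp

lemma p12_mul_p12 : (p12 n : Matrix (X3 n) (X3 n) A) * p12 n = 1 := by
  rw [p12_mul]
  ext x y
  simp only [Matrix.of_apply, p12, Matrix.one_apply]
  refine ite10_congr ?_
  constructor
  · rintro rfl; rfl
  · rintro rfl; rfl

lemma q13_mul_q23 : (q13 n : Matrix (X3 n) (X3 n) A) * q23 n =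
    Matrix.of fun x y =>
      if x.2.2 = x.1.rev ∧ y.2.2 = y.2.1.rev ∧ x.2.1 = y.1 then 1 else 0 := by
  ext x y
  rw [Matrix.mul_apply]
  rw [Finset.sum_eq_single ((y.1, x.2.1, Fin.rev y.1) : X3 n)]
  · simp only [q13, q23, Matrix.of_apply, ite10_mul_ite10]
    refine ite10_congr ?_
    constructor <;> intro h <;> simp_all [Fin.rev_inj] <;> simp [eq_comm, h.2.2] at *
  · intro r _ hr
    simp only [q13, q23, Matrix.of_apply, ite10_mul_ite10]
    rw [if_neg]
    rintro ⟨⟨h1, h2, h3⟩, h4, h5, h6⟩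
    refine hr ?_
    have : r.2.2 = Fin.rev y.1 := by rw [h2, h6]
    rw [Prod.ext_iff, Prod.ext_iff]
    exact ⟨h6, h3.symm, this⟩
  · intro h; exact absurd (Finset.mem_univ _) h

lemma q23_mul_q13 : (q23 n : Matrix (X3 n) (X3 n) A) * q13 n =
    Matrix.of fun x y =>
      if x.2.2 = x.2.1.rev ∧ y.2.2 = y.1.rev ∧ x.1 = y.2.1 then 1 else 0 := by
  ext x y
  rw [Matrix.mul_apply]
  rw [Finset.sum_eq_single ((x.1, y.2.1, Fin.rev y.2.1) : X3 n)]
  · simp only [q13, q23, Matrix.of_apply, ite10_mul_ite10]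
    refine ite10_congr ?_
    constructor <;> intro h <;> simp_all [Fin.rev_inj] <;> simp [eq_comm, h.2.2] at *
  · intro r _ hr
    simp only [q13, q23, Matrix.of_apply, ite10_mul_ite10]
    rw [if_neg]
    rintro ⟨⟨h1, h2, h3⟩, h4, h5, h6⟩
    refine hr ?_
    have : r.2.2 = Fin.rev y.2.1 := by rw [h2, h6]
    rw [Prod.ext_iff, Prod.ext_iff]
    exact ⟨h3.symm, h6, this⟩
  · intro h; exact absurd (Finset.mem_univ _) h

lemma p12_mul_q13 : (p12 n : Matrix (X3 n) (X3 n) A) * q13 n = q23 n * p12 n := by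
  rw [p12_mul, mul_p12]; rfl

lemma p12_mul_q23 : (p12 n : Matrix (X3 n) (X3 n) A) * q23 n = q13 n * p12 n := by
  rw [p12_mul, mul_p12]; rfl

lemma q13_q23_p12 : (q13 n : Matrix (X3 n) (X3 n) A) * q23 n * p12 n = q13 n := by
  rw [q13_mul_q23, mul_p12]; rfl

lemma q23_q13_p12 : (q23 n : Matrix (X3 n) (X3 n) A) * q13 n * p12 n = q23 n := by
  rw [q23_mul_q13, mul_p12]; rfl

end Three
section Emb
variable (n : ℕ) {A : Type*} [Ring A] [Algebra ℂ A]

lemma PnA_sq : (PnA n : Matrix (Fin n × Fin n) (Fin n × Fin n) A) * PnA n = 1 := by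
  ext p q
  rw [Matrix.mul_apply]
  rw [Finset.sum_eq_single ((p.2, p.1) : Fin n × Fin n)]
  · simp only [PnA, Matrix.of_apply, ite10_mul_ite10, Matrix.one_apply]
    refine ite10_congr ?_
    constructor <;> intro h <;> simp_all [Prod.ext_iff] <;> tauto
  · intro r _ hr
    simp only [PnA, Matrix.of_apply, ite10_mul_ite10]
    rw [if_neg]
    rintro ⟨⟨h1, h2⟩, -, -⟩
    exact hr (by rw [Prod.ext_iff]; exact ⟨h2.symm, h1.symm⟩)
  · intro h; exact absurd (Finset.mem_univ _) h

lemma Rcheck_decomp (t : ℂ) :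
    (RcheckA n t : Matrix (Fin n × Fin n) (Fin n × Fin n) A)
      = (t/(t-1)) • PnA n - ((t/(t-1)) * t⁻¹) • 1 := by
  rw [RcheckA, RyA, mul_sub, mul_one, mul_smul_comm, PnA_sq, smul_sub, smul_smul]

/-- embeddings of 2-site and 1-site matrices into 3 sites -/
def m12 (M : Matrix (Fin n × Fin n) (Fin n × Fin n) A) : Matrix (X3 n) (X3 n) A :=
  Matrix.of fun x y => M (x.1, x.2.1) (y.1, y.2.1) * (if x.2.2 = y.2.2 then 1 else 0)

def m13 (M : Matrix (Fin n × Fin n) (Fin n × Fin n) A) : Matrix (X3 n) (X3 n) A :=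
  Matrix.of fun x y => M (x.1, x.2.2) (y.1, y.2.2) * (if x.2.1 = y.2.1 then 1 else 0)

def m23 (M : Matrix (Fin n × Fin n) (Fin n × Fin n) A) : Matrix (X3 n) (X3 n) A :=
  Matrix.of fun x y => M (x.2.1, x.2.2) (y.2.1, y.2.2) * (if x.1 = y.1 then 1 else 0)

def m3 (M : Matrix (Fin n) (Fin n) A) : Matrix (X3 n) (X3 n) A :=
  Matrix.of fun x y => M x.2.2 y.2.2 * (if x.1 = y.1 ∧ x.2.1 = y.2.1 then 1 else 0)

lemma m12_one : m12 n (1 : Matrix (Fin n × Fin n) (Fin n × Fin n) A) = 1 := by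
  ext x y
  simp only [m12, Matrix.of_apply, Matrix.one_apply, ite10_mul_ite10]
  exact ite10_congr (by rw [Prod.ext_iff, Prod.ext_iff, Prod.ext_iff]; tauto)

lemma m13_one : m13 n (1 : Matrix (Fin n × Fin n) (Fin n × Fin n) A) = 1 := by
  ext x y
  simp only [m13, Matrix.of_apply, Matrix.one_apply, ite10_mul_ite10]
  exact ite10_congr (by rw [Prod.ext_iff, Prod.ext_iff, Prod.ext_iff]; tauto)

lemma m23_one : m23 n (1 : Matrix (Fin n × Fin n) (Fin n × Fin n) A) = 1 := by
  ext x y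
  simp only [m23, Matrix.of_apply, Matrix.one_apply, ite10_mul_ite10]
  exact ite10_congr (by rw [Prod.ext_iff, Prod.ext_iff, Prod.ext_iff]; tauto)

lemma m12_smul (c : ℂ) (M : Matrix (Fin n × Fin n) (Fin n × Fin n) A) :
    m12 n (c • M) = c • m12 n M := by
  ext x y; simp [m12, smul_mul_assoc]

lemma m13_smul (c : ℂ) (M : Matrix (Fin n × Fin n) (Fin n × Fin n) A) :
    m13 n (c • M) = c • m13 n M := by
  ext x y; simp [m13, smul_mul_assoc]

lemma m23_smul (c : ℂ) (M : Matrix (Fin n × Fin n) (Fin n × Fin n) A) :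
    m23 n (c • M) = c • m23 n M := by
  ext x y; simp [m23, smul_mul_assoc]

lemma m12_sub (M N : Matrix (Fin n × Fin n) (Fin n × Fin n) A) :
    m12 n (M - N) = m12 n M - m12 n N := by
  simp only [m12, Matrix.sub_apply, Matrix.of_apply, sub_mul]
  rfl

lemma m13_sub (M N : Matrix (Fin n × Fin n) (Fin n × Fin n) A) :
    m13 n (M - N) = m13 n M - m13 n N := by
  simp only [m13, Matrix.sub_apply, Matrix.of_apply, sub_mul]
  rfl

lemma m23_sub (M N : Matrix (Fin n × Fin n) (Fin n × Fin n) A) :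
    m23 n (M - N) = m23 n M - m23 n N := by
  simp only [m23, Matrix.sub_apply, Matrix.of_apply, sub_mul]
  rfl

lemma m12_P : m12 n (PnA n : Matrix (Fin n × Fin n) (Fin n × Fin n) A) = p12 n := by
  ext x y
  simp only [m12, PnA, p12, Matrix.of_apply, ite10_mul_ite10]
  exact ite10_congr (by rw [Prod.ext_iff, Prod.ext_iff]; tauto)

lemma m13_Q : m13 n (QnA n : Matrix (Fin n × Fin n) (Fin n × Fin n) A) = q13 n := by
  ext x y
  simp only [m13, QnA, q13, Matrix.of_apply, ite10_mul_ite10]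
  exact ite10_congr (by tauto)

lemma m23_Q : m23 n (QnA n : Matrix (Fin n × Fin n) (Fin n × Fin n) A) = q23 n := by
  ext x y
  simp only [m23, QnA, q23, Matrix.of_apply, ite10_mul_ite10]
  exact ite10_congr (by tauto)

lemma m12_rcheck (t : ℂ) :
    m12 n (RcheckA n t : Matrix (Fin n × Fin n) (Fin n × Fin n) A)
      = (t/(t-1)) • p12 n - ((t/(t-1)) * t⁻¹) • 1 := by
  rw [Rcheck_decomp, m12_sub, m12_smul, m12_smul, m12_P, m12_one]

lemma m13_rt (w : ℂ) :
    m13 n (RtA n w : Matrix (Fin n × Fin n) (Fin n × Fin n) A) = 1 - w⁻¹ • q13 n := by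
  rw [RtA, m13_sub, m13_smul, m13_Q, m13_one]

lemma m23_rt (w : ℂ) :
    m23 n (RtA n w : Matrix (Fin n × Fin n) (Fin n × Fin n) A) = 1 - w⁻¹ • q23 n := by
  rw [RtA, m23_sub, m23_smul, m23_Q, m23_one]

lemma key1 (α β : ℂ) (hα : α ≠ 0) (hβ : β ≠ 0) :
    ((β - α) • p12 n - 1) * ((1 : Matrix (X3 n) (X3 n) A) - α⁻¹ • q13 n)
        * (1 - β⁻¹ • q23 n)
      = (1 - β⁻¹ • q13 n) * (1 - α⁻¹ • q23 n) * ((β - α) • p12 n - 1) := by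
  simp only [sub_mul, mul_sub, mul_one, one_mul, smul_mul_assoc, mul_smul_comm, smul_smul]
  rw [p12_mul_q13, mul_assoc (q23 n) (p12 n) (q23 n), p12_mul_q23,
    ← mul_assoc (q23 n) (q13 n) (p12 n), q23_q13_p12, q13_q23_p12]
  match_scalars <;> field_simp <;> ring

lemma key2 (a b : ℂ) (ha : a ≠ 0) (hb : b ≠ 0) :
    ((a - b) • p12 n - 1) * ((1 : Matrix (X3 n) (X3 n) A) - b⁻¹ • q23 n)
        * (1 - a⁻¹ • q13 n)
      = (1 - a⁻¹ • q23 n) * (1 - b⁻¹ • q13 n) * ((a - b) • p12 n - 1) := by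
  simp only [sub_mul, mul_sub, mul_one, one_mul, smul_mul_assoc, mul_smul_comm, smul_smul]
  rw [p12_mul_q23, mul_assoc (q13 n) (p12 n) (q13 n), p12_mul_q13,
    ← mul_assoc (q13 n) (q23 n) (p12 n), q13_q23_p12, q23_q13_p12]
  match_scalars <;> field_simp <;> ring

lemma yang3 (α β : ℂ) (hα : α ≠ 0) (hβ : β ≠ 0) (ht0 : β - α ≠ 0) (ht1 : β - α ≠ 1) :
    m12 n (RcheckA n (β - α) : Matrix (Fin n × Fin n) (Fin n × Fin n) A)
        * m13 n (RtA n α) * m23 n (RtA n β)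
      = m13 n (RtA n β) * m23 n (RtA n α) * m12 n (RcheckA n (β - α)) := by
  have ht1' : β - α - 1 ≠ 0 := fun h => ht1 (by linear_combination h)
  have hfac : m12 n (RcheckA n (β - α) : Matrix (Fin n × Fin n) (Fin n × Fin n) A)
      = (((β - α)/(β - α - 1)) * (β - α)⁻¹) • ((β - α) • p12 n - 1) := by
    rw [m12_rcheck, smul_sub, smul_smul]
    congr 2
    field_simp
  rw [hfac]
  simp only [m13_rt, m23_rt, smul_mul_assoc, mul_smul_comm]
  congr 1
  exact key1 n α β hα hβ

lemma yang3' (a b : ℂ) (ha : a ≠ 0) (hb : b ≠ 0) (ht0 : a - b ≠ 0) (ht1 : a - b ≠ 1) :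
    m12 n (RcheckA n (a - b) : Matrix (Fin n × Fin n) (Fin n × Fin n) A)
        * m23 n (RtA n b) * m13 n (RtA n a)
      = m23 n (RtA n a) * m13 n (RtA n b) * m12 n (RcheckA n (a - b)) := by
  have ht1' : a - b - 1 ≠ 0 := fun h => ht1 (by linear_combination h)
  have hfac : m12 n (RcheckA n (a - b) : Matrix (Fin n × Fin n) (Fin n × Fin n) A)
      = (((a - b)/(a - b - 1)) * (a - b)⁻¹) • ((a - b) • p12 n - 1) := by
    rw [m12_rcheck, smul_sub, smul_smul]
    congr 2
    field_simp
  rw [hfac]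
  simp only [m13_rt, m23_rt, smul_mul_assoc, mul_smul_comm]
  congr 1
  exact key2 n a b ha hb

end Emb

section LiftHelp
variable {A : Type*} [Ring A] [Algebra ℂ A]

lemma mul_ite10_mul (a b : A) (c d : Prop) [Decidable c] [Decidable d] :
    (a * (if c then (1:A) else 0)) * (b * (if d then 1 else 0))
      = (a * b) * (if c ∧ d then 1 else 0) := by
  by_cases hc : c <;> by_cases hd : d <;> simp [hc, hd]

lemma sum_delta_chain {Z : Type*} [Fintype Z] [DecidableEq Z] (w w' : Z) (v : A) :
    ∑ z : Z, (if w = z ∧ z = w' then v else 0) = if w = w' then v else 0 := by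
  have h : ∀ z : Z, (if w = z ∧ z = w' then v else 0)
      = if z = w then (if w = w' then v else 0) else 0 := by
    intro z
    by_cases h1 : z = w
    · subst h1; by_cases h2 : z = w' <;> simp [h2]
    · rw [if_neg (fun hc : w = z ∧ z = w' => h1 hc.1.symm), if_neg h1]
  simp_rw [h]
  rw [Finset.sum_ite_eq' Finset.univ w fun _ => if w = w' then v else 0]
  simp

lemma commute_mul_ite10 (a : A) (ha : ∀ x, Commute a x) (c : Prop) [Decidable c] (z : A) :
    Commute (a * (if c then (1:A) else 0)) z :=
  Commute.mul_left (ha z) (commute_ite10 c z)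

end LiftHelp

section Lift
variable (n m : ℕ) {A : Type*} [Ring A] [Algebra ℂ A] (i i' : Fin m)

/-- the `X3`-coordinates (ã_i, ã_{i'}, a) of an index -/
def xc (p : NIdx n m) : X3 n := (p.2.1 i, p.2.1 i', p.1)

/-- the remaining coordinates -/
def zc (p : NIdx n m) : ({j : Fin m // j ≠ i ∧ j ≠ i'} → Fin n) × (Fin m → Fin n) :=
  (fun j => p.2.1 j.1, p.2.2)

lemma zc_eq_iff (p q : NIdx n m) : zc n m i i' p = zc n m i i' q ↔
    (p.2.2 = q.2.2 ∧ ∀ j, j ≠ i → j ≠ i' → p.2.1 j = q.2.1 j) := by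
  constructor
  · intro hz
    rw [Prod.ext_iff] at hz
    exact ⟨hz.2, fun j hj hj' => congrFun hz.1 ⟨j, hj, hj'⟩⟩
  · rintro ⟨h1, h2⟩
    exact Prod.ext (funext fun j => h2 j.1 j.2.1 j.2.2) h1

/-- lift of a 3-site matrix to `NIdx` -/
def Phi (M : Matrix (X3 n) (X3 n) A) : Matrix (NIdx n m) (NIdx n m) A :=
  Matrix.of fun p q => M (xc n m i i' p) (xc n m i i' q) *
    (if zc n m i i' p = zc n m i i' q then 1 else 0)

/-- splitting equivalence -/
def XZ (h : i ≠ i') :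
    NIdx n m ≃ X3 n × (({j : Fin m // j ≠ i ∧ j ≠ i'} → Fin n) × (Fin m → Fin n)) where
  toFun p := (xc n m i i' p, zc n m i i' p)
  invFun x := (x.1.2.2,
    fun j => if hj : j = i then x.1.1 else if hj' : j = i' then x.1.2.1 else x.2.1 ⟨j, hj, hj'⟩,
    x.2.2)
  left_inv p := by
    refine Prod.ext rfl (Prod.ext ?_ rfl)
    funext j
    by_cases hj : j = i
    · subst hj; simp [xc, zc]
    · by_cases hj' : j = i'
      · subst hj'; simp [xc, zc, hj]
      · simp [xc, zc, hj, hj']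
  right_inv x := by
    refine Prod.ext (Prod.ext ?_ (Prod.ext ?_ rfl)) (Prod.ext ?_ rfl)
    · simp [xc]
    · have h2 : i' ≠ i := fun hh => h hh.symm
      simp [xc, h2]
    · funext j
      simp [zc, j.2.1, j.2.2]

lemma Phi_mul (h : i ≠ i') (M N : Matrix (X3 n) (X3 n) A) :
    Phi n m i i' (M * N) = Phi n m i i' M * Phi n m i i' N := by
  ext p q
  rw [Matrix.mul_apply]
  rw [Fintype.sum_equiv (XZ n m i i' h)
    (fun r => Phi n m i i' M p r * Phi n m i i' N r q)
    (fun y => Phi n m i i' M p ((XZ n m i i' h).symm y)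
      * Phi n m i i' N ((XZ n m i i' h).symm y) q)
    (fun r => by simp only [Equiv.symm_apply_apply])]
  have hev : ∀ y : X3 n × (({j : Fin m // j ≠ i ∧ j ≠ i'} → Fin n) × (Fin m → Fin n)),
      xc n m i i' ((XZ n m i i' h).symm y) = y.1 ∧
      zc n m i i' ((XZ n m i i' h).symm y) = y.2 := by
    intro y
    have h2 := (XZ n m i i' h).right_inv y
    have h3 : XZ n m i i' h ((XZ n m i i' h).symm y) = y := h2
    rw [show ∀ z, XZ n m i i' h z = (xc n m i i' z, zc n m i i' z) from fun z => rfl] at h3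
    exact ⟨congrArg Prod.fst h3, congrArg Prod.snd h3⟩
  have hev1 : ∀ y, Phi n m i i' M p ((XZ n m i i' h).symm y)
      = M (xc n m i i' p) y.1 * (if zc n m i i' p = y.2 then 1 else 0) := by
    intro y; rw [Phi, Matrix.of_apply, (hev y).1, (hev y).2]
  have hev2 : ∀ y, Phi n m i i' N ((XZ n m i i' h).symm y) q
      = N y.1 (xc n m i i' q) * (if y.2 = zc n m i i' q then 1 else 0) := by
    intro y; rw [Phi, Matrix.of_apply, (hev y).1, (hev y).2]
  rw [Fintype.sum_prod_type]
  simp only [hev1, hev2]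
  simp_rw [mul_ite10_mul, mul_ite, mul_one, mul_zero]
  simp_rw [sum_delta_chain]
  rw [Phi, Matrix.of_apply, Matrix.mul_apply, Finset.sum_mul]
  simp_rw [mul_ite, mul_one, mul_zero]

lemma onTT_phi (h : i ≠ i') (M : Matrix (Fin n × Fin n) (Fin n × Fin n) A) :
    onTT n m i i' M = Phi n m i i' (m12 n M) := by
  ext p q
  simp only [onTT, Phi, m12, xc, Matrix.of_apply, mul_assoc, ite10_mul_ite10, zc_eq_iff]

lemma onTA_i_phi (h : i ≠ i') (M : Matrix (Fin n × Fin n) (Fin n × Fin n) A) :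
    onTA n m i M = Phi n m i i' (m13 n M) := by
  ext p q
  simp only [onTA, Phi, m13, xc, Matrix.of_apply, mul_assoc, ite10_mul_ite10, zc_eq_iff]
  congr 1
  refine ite10_congr ⟨?_, ?_⟩
  · rintro ⟨h1, h2⟩
    refine ⟨h2 i' (Ne.symm h), h1, fun j hj hj' => h2 j hj⟩
  · rintro ⟨h1, h2, h3⟩
    refine ⟨h2, fun j hj => ?_⟩
    by_cases hj' : j = i'
    · subst hj'; exact h1
    · exact h3 j hj hj'

lemma onTA_i'_phi (h : i ≠ i') (M : Matrix (Fin n × Fin n) (Fin n × Fin n) A) :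
    onTA n m i' M = Phi n m i i' (m23 n M) := by
  ext p q
  simp only [onTA, Phi, m23, xc, Matrix.of_apply, mul_assoc, ite10_mul_ite10, zc_eq_iff]
  congr 1
  refine ite10_congr ⟨?_, ?_⟩
  · rintro ⟨h1, h2⟩
    refine ⟨h2 i h, h1, fun j hj hj' => h2 j hj'⟩
  · rintro ⟨h1, h2, h3⟩
    refine ⟨h2, fun j hj' => ?_⟩
    by_cases hj : j = i
    · subst hj; exact h1
    · exact h3 j hj hj'

lemma onA_phi (h : i ≠ i') (M : Matrix (Fin n) (Fin n) A) :
    onA n m M = Phi n m i i' (m3 n M) := by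
  ext p q
  simp only [onA, Phi, m3, xc, Matrix.of_apply, mul_assoc, ite10_mul_ite10, zc_eq_iff]
  congr 1
  refine ite10_congr ⟨?_, ?_⟩
  · intro h1
    have h2 : p.2.1 = q.2.1 := congrArg Prod.fst h1
    have h3 : p.2.2 = q.2.2 := congrArg Prod.snd h1
    exact ⟨⟨congrFun h2 i, congrFun h2 i'⟩, h3, fun j _ _ => congrFun h2 j⟩
  · rintro ⟨⟨h1, h2⟩, h3, h4⟩
    refine Prod.ext (funext fun j => ?_) h3
    by_cases hj : j = i
    · subst hj; exact h1
    · by_cases hj' : j = i'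
      · subst hj'; exact h2
      · exact h4 j hj hj'

lemma front_ex (h : i ≠ i') (α β : ℂ) (hα : α ≠ 0) (hβ : β ≠ 0)
    (ht0 : β - α ≠ 0) (ht1 : β - α ≠ 1) :
    onTT n m i i' (RcheckA n (β - α) : Matrix (Fin n × Fin n) (Fin n × Fin n) A)
        * onTA n m i (RtA n α) * onTA n m i' (RtA n β)
      = onTA n m i (RtA n β) * onTA n m i' (RtA n α)
        * onTT n m i i' (RcheckA n (β - α)) := by
  rw [onTT_phi n m i i' h, onTA_i_phi n m i i' h (RtA n α), onTA_i'_phi n m i i' h (RtA n β),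
    onTA_i_phi n m i i' h (RtA n β), onTA_i'_phi n m i i' h (RtA n α),
    ← Phi_mul n m i i' h, ← Phi_mul n m i i' h, ← Phi_mul n m i i' h, ← Phi_mul n m i i' h,
    yang3 n α β hα hβ ht0 ht1]

lemma back_ex (h : i ≠ i') (a b : ℂ) (ha : a ≠ 0) (hb : b ≠ 0)
    (ht0 : a - b ≠ 0) (ht1 : a - b ≠ 1) :
    onTT n m i i' (RcheckA n (a - b) : Matrix (Fin n × Fin n) (Fin n × Fin n) A)
        * onTA n m i' (RtA n b) * onTA n m i (RtA n a)
      = onTA n m i' (RtA n a) * onTA n m i (RtA n b)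
        * onTT n m i i' (RcheckA n (a - b)) := by
  rw [onTT_phi n m i i' h, onTA_i_phi n m i i' h (RtA n a), onTA_i'_phi n m i i' h (RtA n b),
    onTA_i_phi n m i i' h (RtA n b), onTA_i'_phi n m i i' h (RtA n a),
    ← Phi_mul n m i i' h, ← Phi_mul n m i i' h, ← Phi_mul n m i i' h, ← Phi_mul n m i i' h,
    yang3' n a b ha hb ht0 ht1]


end Lift

section Central
variable (n : ℕ) {A : Type*} [Ring A] [Algebra ℂ A]

lemma commute_csmul {c : ℂ} {x a : A} (hx : Commute x a) : Commute (c • x) a := by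
  unfold Commute SemiconjBy at *
  rw [smul_mul_assoc, mul_smul_comm, hx]

lemma RtA_central (w : ℂ) (p q : Fin n × Fin n) (a : A) :
    Commute ((RtA n w : Matrix (Fin n × Fin n) (Fin n × Fin n) A) p q) a := by
  rw [RtA, Matrix.sub_apply, Matrix.smul_apply]
  refine Commute.sub_left ?_ (commute_csmul ?_)
  · rw [Matrix.one_apply]; exact commute_ite10 _ _
  · rw [QnA, Matrix.of_apply]; exact commute_ite10 _ _

lemma Rcheck_central (t : ℂ) (p q : Fin n × Fin n) (a : A) :
    Commute ((RcheckA n t : Matrix (Fin n × Fin n) (Fin n × Fin n) A) p q) a := by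
  rw [Rcheck_decomp, Matrix.sub_apply, Matrix.smul_apply, Matrix.smul_apply]
  refine Commute.sub_left (commute_csmul ?_) (commute_csmul ?_)
  · rw [PnA, Matrix.of_apply]; exact commute_ite10 _ _
  · rw [Matrix.one_apply]; exact commute_ite10 _ _

end Central

section Comm
variable (n m : ℕ) {A : Type*} [Ring A] [Algebra ℂ A] (i i' : Fin m)
variable (M : Matrix (Fin n × Fin n) (Fin n × Fin n) A)

lemma onTT_comm_onSA (hM : ∀ x y (a : A), Commute (M x y) a)
    (j : Fin m) (N : Matrix (Fin n × Fin n) (Fin n × Fin n) A) :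
    onTT n m i i' M * onSA n m j N = onSA n m j N * onTT n m i i' M := by
  ext p q
  rw [Matrix.mul_apply, Matrix.mul_apply]
  have hL : (∑ r, onTT n m i i' M p r * onSA n m j N r q)
      = onTT n m i i' M p (p.1, q.2.1, p.2.2) * onSA n m j N (p.1, q.2.1, p.2.2) q := by
    apply Finset.sum_eq_single
    · intro r _ hr
      by_cases h1 : p.1 = r.1 ∧ p.2.2 = r.2.2 ∧ ∀ k, k ≠ i → k ≠ i' → p.2.1 k = r.2.1 k
      · by_cases h2 : r.2.1 = q.2.1 ∧ ∀ k, k ≠ j → r.2.2 k = q.2.2 k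
        · refine absurd ?_ hr
          rw [Prod.ext_iff, Prod.ext_iff]
          exact ⟨h1.1.symm, h2.1, h1.2.1.symm⟩
        · simp only [onSA, Matrix.of_apply]; rw [if_neg h2, mul_zero, mul_zero]
      · simp only [onTT, Matrix.of_apply]; rw [if_neg h1, mul_zero, zero_mul]
    · intro hm; exact absurd (Finset.mem_univ _) hm
  have hR : (∑ r, onSA n m j N p r * onTT n m i i' M r q)
      = onSA n m j N p (q.1, p.2.1, q.2.2) * onTT n m i i' M (q.1, p.2.1, q.2.2) q := by
    apply Finset.sum_eq_single
    · intro r _ hr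
      by_cases h1 : p.2.1 = r.2.1 ∧ ∀ k, k ≠ j → p.2.2 k = r.2.2 k
      · by_cases h2 : r.1 = q.1 ∧ r.2.2 = q.2.2 ∧ ∀ k, k ≠ i → k ≠ i' → r.2.1 k = q.2.1 k
        · refine absurd ?_ hr
          rw [Prod.ext_iff, Prod.ext_iff]
          exact ⟨h2.1, h1.1.symm, h2.2.1⟩
        · simp only [onTT, Matrix.of_apply]; rw [if_neg h2, mul_zero, mul_zero]
      · simp only [onSA, Matrix.of_apply]; rw [if_neg h1, mul_zero, zero_mul]
    · intro hm; exact absurd (Finset.mem_univ _) hm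
  rw [hL, hR]
  simp only [onTT, onSA, Matrix.of_apply, eq_self_iff_true, true_and, and_true, mul_one,
    Prod.mk.eta]
  exact (commute_mul_ite10 _ (fun x => hM _ _ x) _ _).eq

lemma onTT_comm_onA (hM : ∀ x y (a : A), Commute (M x y) a)
    (N : Matrix (Fin n) (Fin n) A) :
    onTT n m i i' M * onA n m N = onA n m N * onTT n m i i' M := by
  ext p q
  rw [Matrix.mul_apply, Matrix.mul_apply]
  have hL : (∑ r, onTT n m i i' M p r * onA n m N r q)
      = onTT n m i i' M p (p.1, q.2.1, q.2.2) * onA n m N (p.1, q.2.1, q.2.2) q := by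
    apply Finset.sum_eq_single
    · intro r _ hr
      by_cases h1 : p.1 = r.1 ∧ p.2.2 = r.2.2 ∧ ∀ k, k ≠ i → k ≠ i' → p.2.1 k = r.2.1 k
      · by_cases h2 : r.2 = q.2
        · obtain ⟨h2a, h2b⟩ := Prod.ext_iff.mp h2
          refine absurd ?_ hr
          rw [Prod.ext_iff, Prod.ext_iff]
          exact ⟨h1.1.symm, h2a, h2b⟩
        · simp only [onA, Matrix.of_apply]; rw [if_neg h2, mul_zero, mul_zero]
      · simp only [onTT, Matrix.of_apply]; rw [if_neg h1, mul_zero, zero_mul]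
    · intro hm; exact absurd (Finset.mem_univ _) hm
  have hR : (∑ r, onA n m N p r * onTT n m i i' M r q)
      = onA n m N p (q.1, p.2.1, p.2.2) * onTT n m i i' M (q.1, p.2.1, p.2.2) q := by
    apply Finset.sum_eq_single
    · intro r _ hr
      by_cases h1 : p.2 = r.2
      · by_cases h2 : r.1 = q.1 ∧ r.2.2 = q.2.2 ∧ ∀ k, k ≠ i → k ≠ i' → r.2.1 k = q.2.1 k
        · obtain ⟨h1a, h1b⟩ := Prod.ext_iff.mp h1
          refine absurd ?_ hr
          rw [Prod.ext_iff, Prod.ext_iff]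
          exact ⟨h2.1, h1a.symm, h1b.symm⟩
        · simp only [onTT, Matrix.of_apply]; rw [if_neg h2, mul_zero, mul_zero]
      · simp only [onA, Matrix.of_apply]; rw [if_neg h1, mul_zero, zero_mul]
    · intro hm; exact absurd (Finset.mem_univ _) hm
  rw [hL, hR]
  simp only [onTT, onA, Matrix.of_apply, eq_self_iff_true, true_and, and_true, mul_one,
    Prod.mk.eta]
  exact (commute_mul_ite10 _ (fun x => hM _ _ x) _ _).eq

lemma onTT_comm_onTA (hM : ∀ x y (a : A), Commute (M x y) a)
    (j : Fin m) (hji : j ≠ i) (hji' : j ≠ i')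
    (N : Matrix (Fin n × Fin n) (Fin n × Fin n) A) :
    onTT n m i i' M * onTA n m j N = onTA n m j N * onTT n m i i' M := by
  ext p q
  rw [Matrix.mul_apply, Matrix.mul_apply]
  have hL : (∑ r, onTT n m i i' M p r * onTA n m j N r q)
      = onTT n m i i' M p (p.1, Function.update q.2.1 j (p.2.1 j), q.2.2)
        * onTA n m j N (p.1, Function.update q.2.1 j (p.2.1 j), q.2.2) q := by
    apply Finset.sum_eq_single
    · intro r _ hr
      by_cases h1 : p.1 = r.1 ∧ p.2.2 = r.2.2 ∧ ∀ k, k ≠ i → k ≠ i' → p.2.1 k = r.2.1 k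
      · by_cases h2 : r.2.2 = q.2.2 ∧ ∀ k, k ≠ j → r.2.1 k = q.2.1 k
        · refine absurd ?_ hr
          rw [Prod.ext_iff, Prod.ext_iff]
          refine ⟨h1.1.symm, ?_, h2.1⟩
          funext k
          show r.2.1 k = Function.update q.2.1 j (p.2.1 j) k
          by_cases hkj : k = j
          · subst hkj
            rw [Function.update_self]
            exact (h1.2.2 k hji hji').symm
          · rw [Function.update_of_ne hkj]
            exact h2.2 k hkj
        · simp only [onTA, Matrix.of_apply]; rw [if_neg h2, mul_zero, mul_zero]
      · simp only [onTT, Matrix.of_apply]; rw [if_neg h1, mul_zero, zero_mul]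
    · intro hm; exact absurd (Finset.mem_univ _) hm
  have hR : (∑ r, onTA n m j N p r * onTT n m i i' M r q)
      = onTA n m j N p (q.1, Function.update p.2.1 j (q.2.1 j), p.2.2)
        * onTT n m i i' M (q.1, Function.update p.2.1 j (q.2.1 j), p.2.2) q := by
    apply Finset.sum_eq_single
    · intro r _ hr
      by_cases h1 : p.2.2 = r.2.2 ∧ ∀ k, k ≠ j → p.2.1 k = r.2.1 k
      · by_cases h2 : r.1 = q.1 ∧ r.2.2 = q.2.2 ∧ ∀ k, k ≠ i → k ≠ i' → r.2.1 k = q.2.1 k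
        · refine absurd ?_ hr
          rw [Prod.ext_iff, Prod.ext_iff]
          refine ⟨h2.1, ?_, h1.1.symm⟩
          funext k
          show r.2.1 k = Function.update p.2.1 j (q.2.1 j) k
          by_cases hkj : k = j
          · subst hkj
            rw [Function.update_self]
            exact h2.2.2 k hji hji'
          · rw [Function.update_of_ne hkj]
            exact (h1.2 k hkj).symm
        · simp only [onTT, Matrix.of_apply]; rw [if_neg h2, mul_zero, mul_zero]
      · simp only [onTA, Matrix.of_apply]; rw [if_neg h1, mul_zero, zero_mul]
    · intro hm; exact absurd (Finset.mem_univ _) hm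
  rw [hL, hR]
  simp only [onTT, onTA, Matrix.of_apply, eq_self_iff_true, true_and, and_true, mul_one,
    Prod.mk.eta, Function.update_self,
    Function.update_of_ne (Ne.symm hji), Function.update_of_ne (Ne.symm hji')]
  have c1 : ∀ j1, j1 ≠ j → Function.update q.2.1 j (p.2.1 j) j1 = q.2.1 j1 :=
    fun k hk => Function.update_of_ne hk _ _
  have c2 : ∀ j1, j1 ≠ j → p.2.1 j1 = Function.update p.2.1 j (q.2.1 j) j1 :=
    fun k hk => (Function.update_of_ne hk _ _).symm
  rw [if_pos c1, if_pos c2]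
  have hiff : (p.2.2 = q.2.2 ∧ ∀ k, k ≠ i → k ≠ i' →
        p.2.1 k = Function.update q.2.1 j (p.2.1 j) k)
      ↔ (p.2.2 = q.2.2 ∧ ∀ k, k ≠ i → k ≠ i' →
        Function.update p.2.1 j (q.2.1 j) k = q.2.1 k) := by
    refine and_congr_right fun _ => ?_
    constructor <;> intro hc k hk hk' <;> by_cases hkj : k = j
    · subst hkj; simp
    · have := hc k hk hk'; rw [Function.update_of_ne hkj] at this ⊢; exact this
    · subst hkj; simp
    · have := hc k hk hk'; rw [Function.update_of_ne hkj] at this ⊢; exact this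
  rw [ite10_congr (A := A) hiff]
  exact (commute_mul_ite10 _ (fun x => hM _ _ x) _ _).eq

end Comm

section ListMach
variable {R : Type*} [Monoid R]

lemma finRange_split (m : ℕ) (i i' : Fin m) (hii' : (i : ℕ) + 1 = (i' : ℕ)) :
    List.finRange m = (List.finRange m).take (i : ℕ)
      ++ i :: i' :: (List.finRange m).drop ((i : ℕ) + 2) := by
  conv_lhs => rw [← List.take_append_drop (i : ℕ) (List.finRange m)]
  congr 1
  have hlen : (List.finRange m).length = m := List.length_finRange
  have h1 : (i : ℕ) < (List.finRange m).length := by rw [hlen]; exact i.isLt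
  have h2 : (i : ℕ) + 1 < (List.finRange m).length := by rw [hlen, hii']; exact i'.isLt
  rw [List.drop_eq_getElem_cons h1, List.drop_eq_getElem_cons h2]
  congr 1
  · rw [List.getElem_finRange]; exact Fin.ext rfl
  · congr 1
    rw [List.getElem_finRange]; exact Fin.ext hii'

lemma split_not_mem (m : ℕ) (i i' : Fin m) (hii' : (i : ℕ) + 1 = (i' : ℕ)) :
    (i ∉ (List.finRange m).take (i : ℕ)) ∧ (i' ∉ (List.finRange m).take (i : ℕ)) ∧
    (i ∉ (List.finRange m).drop ((i : ℕ) + 2)) ∧ (i' ∉ (List.finRange m).drop ((i : ℕ) + 2)) := by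
  have hn := List.nodup_finRange m
  rw [finRange_split m i i' hii', List.nodup_append] at hn
  obtain ⟨h1, h2, h3⟩ := hn
  rw [List.nodup_cons, List.mem_cons, List.nodup_cons] at h2
  push_neg at h2
  refine ⟨fun hc => h3 _ hc _ (by simp) rfl, fun hc => h3 _ hc _ (by simp) rfl, h2.1.2, h2.2.1⟩

lemma prod_swap_gen (m : ℕ) (l1 l2 : List (Fin m)) (a b i i' : Fin m)
    (g g' : Fin m → R) (Rm : R)
    (hg : ∀ k, k ≠ i → k ≠ i' → g k = g' k)
    (hcomm : ∀ k, k ≠ i → k ≠ i' → Commute Rm (g' k))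
    (hmid : Rm * g a * g b = g' a * g' b * Rm)
    (n1 : i ∉ l1) (n2 : i' ∉ l1) (n3 : i ∉ l2) (n4 : i' ∉ l2) :
    Rm * ((l1 ++ a :: b :: l2).map g).prod = ((l1 ++ a :: b :: l2).map g').prod * Rm := by
  have e1 : l1.map g = l1.map g' :=
    List.map_congr_left fun k hk => hg k (fun hc => n1 (hc ▸ hk)) (fun hc => n2 (hc ▸ hk))
  have e2 : l2.map g = l2.map g' :=
    List.map_congr_left fun k hk => hg k (fun hc => n3 (hc ▸ hk)) (fun hc => n4 (hc ▸ hk))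
  have c1 : Commute Rm (l1.map g').prod := by
    refine Commute.list_prod_right _ _ fun x hx => ?_
    obtain ⟨k, hk, rfl⟩ := List.mem_map.mp hx
    exact hcomm k (fun hc => n1 (hc ▸ hk)) (fun hc => n2 (hc ▸ hk))
  have c2 : Commute Rm (l2.map g').prod := by
    refine Commute.list_prod_right _ _ fun x hx => ?_
    obtain ⟨k, hk, rfl⟩ := List.mem_map.mp hx
    exact hcomm k (fun hc => n3 (hc ▸ hk)) (fun hc => n4 (hc ▸ hk))
  simp only [List.map_append, List.prod_append, List.map_cons, List.prod_cons, e1, e2,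
    ← mul_assoc]
  rw [c1.eq]
  rw [mul_assoc ((l1.map g').prod) Rm (g a)]
  rw [mul_assoc ((l1.map g').prod) (Rm * g a) (g b)]
  rw [hmid]
  simp only [← mul_assoc]
  rw [mul_assoc _ Rm ((l2.map g').prod), c2.eq]
  simp only [← mul_assoc]

lemma finRange_rev_split (m : ℕ) (i i' : Fin m) (hii' : (i : ℕ) + 1 = (i' : ℕ)) :
    (List.finRange m).reverse = ((List.finRange m).drop ((i : ℕ) + 2)).reverse
      ++ i' :: i :: ((List.finRange m).take (i : ℕ)).reverse := by
  conv_lhs => rw [finRange_split m i i' hii']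
  rw [List.reverse_append, List.reverse_cons, List.reverse_cons]
  simp [List.append_assoc]

lemma prod_swap_list (m : ℕ) (i i' : Fin m) (hii' : (i : ℕ) + 1 = (i' : ℕ))
    (g g' : Fin m → R) (Rm : R)
    (hg : ∀ k, k ≠ i → k ≠ i' → g k = g' k)
    (hcomm : ∀ k, k ≠ i → k ≠ i' → Commute Rm (g' k))
    (hmid : Rm * g i * g i' = g' i * g' i' * Rm) :
    Rm * ((List.finRange m).map g).prod = ((List.finRange m).map g').prod * Rm := by
  obtain ⟨m1, m2, m3, m4⟩ := split_not_mem m i i' hii'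
  rw [finRange_split m i i' hii']
  exact prod_swap_gen m _ _ i i' i i' g g' Rm hg hcomm hmid m1 m2 m3 m4

lemma prod_swap_rev (m : ℕ) (i i' : Fin m) (hii' : (i : ℕ) + 1 = (i' : ℕ))
    (g g' : Fin m → R) (Rm : R)
    (hg : ∀ k, k ≠ i → k ≠ i' → g k = g' k)
    (hcomm : ∀ k, k ≠ i → k ≠ i' → Commute Rm (g' k))
    (hmid : Rm * g i' * g i = g' i' * g' i * Rm) :
    Rm * ((List.finRange m).reverse.map g).prod
      = ((List.finRange m).reverse.map g').prod * Rm := by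
  obtain ⟨m1, m2, m3, m4⟩ := split_not_mem m i i' hii'
  rw [finRange_rev_split m i i' hii']
  refine prod_swap_gen m _ _ i' i i i' g g' Rm hg hcomm hmid ?_ ?_ ?_ ?_ <;>
    rw [List.mem_reverse] <;> assumption

end ListMach

section Sigma
variable (n m : ℕ) {A : Type*} [Ring A] [Algebra ℂ A]

/-- the swap of the two function components -/
def swE : NIdx n m ≃ NIdx n m :=
  Equiv.prodCongr (Equiv.refl (Fin n)) (Equiv.prodComm (Fin m → Fin n) (Fin m → Fin n))

lemma swE_apply (p : NIdx n m) : swE n m p = (p.1, p.2.2, p.2.1) := rfl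

/-- conjugation by the swap -/
def conjS (M : Matrix (NIdx n m) (NIdx n m) A) : Matrix (NIdx n m) (NIdx n m) A :=
  M.submatrix (swE n m) (swE n m)

lemma conjS_mul (M N : Matrix (NIdx n m) (NIdx n m) A) :
    conjS n m (M * N) = conjS n m M * conjS n m N := by
  rw [conjS, conjS, conjS, Matrix.submatrix_mul_equiv]

lemma conjS_conjS (M : Matrix (NIdx n m) (NIdx n m) A) : conjS n m (conjS n m M) = M := by
  ext p q; rfl

lemma conjS_onTA (i : Fin m) (M : Matrix (Fin n × Fin n) (Fin n × Fin n) A) :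
    conjS n m (onTA n m i M) = onSA n m i M := by
  ext p q; rfl

lemma conjS_onSA (i : Fin m) (M : Matrix (Fin n × Fin n) (Fin n × Fin n) A) :
    conjS n m (onSA n m i M) = onTA n m i M := by
  ext p q; rfl

lemma conjS_onTT (i i' : Fin m) (M : Matrix (Fin n × Fin n) (Fin n × Fin n) A) :
    conjS n m (onTT n m i i' M) = onSS n m i i' M := by
  ext p q; rfl

lemma conjS_onSS (i i' : Fin m) (M : Matrix (Fin n × Fin n) (Fin n × Fin n) A) :
    conjS n m (onSS n m i i' M) = onTT n m i i' M := by
  ext p q; rfl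

lemma conjS_onA (M : Matrix (Fin n) (Fin n) A) :
    conjS n m (onA n m M) = onA n m M := by
  ext p q
  simp only [conjS, Matrix.submatrix_apply, onA, Matrix.of_apply, swE_apply]
  congr 1
  refine ite10_congr ?_
  rw [Prod.ext_iff, Prod.ext_iff]
  tauto

lemma conjS_prod (l : List (Matrix (NIdx n m) (NIdx n m) A)) :
    conjS n m l.prod = (l.map (conjS n m)).prod := by
  induction l with
  | nil => ext p q; simp [conjS, Matrix.one_apply]
  | cons a l ih => rw [List.prod_cons, conjS_mul, ih, List.map_cons, List.prod_cons]

end Sigma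

section Wrap
variable (n m : ℕ) {A : Type*} [Ring A] [Algebra ℂ A]

lemma ne_of_succ {m : ℕ} {i i' : Fin m} (hii' : (i : ℕ) + 1 = (i' : ℕ)) : i ≠ i' := by
  intro hc
  rw [hc] at hii'
  omega

lemma front_wrap (i i' : Fin m) (hii' : (i : ℕ) + 1 = (i' : ℕ)) (v : ℂ) (x : Fin m → ℂ)
    (h0 : x i - v ≠ 0) (h1 : x i' - v ≠ 0)
    (ht0 : x i' - x i ≠ 0) (ht1 : x i' - x i ≠ 1) :
    onTT n m i i' (RcheckA n (x i' - x i) : Matrix (Fin n × Fin n) (Fin n × Fin n) A) *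
      ((List.finRange m).map (fun k => onTA n m k (RtA n (x k - v)))).prod
    = ((List.finRange m).map (fun k => onTA n m k (RtA n
        ((Function.update (Function.update x i (x i')) i' (x i)) k - v)))).prod *
      onTT n m i i' (RcheckA n (x i' - x i)) := by
  have hne : i ≠ i' := ne_of_succ hii'
  refine prod_swap_list m i i' hii' _ _ _ ?_ ?_ ?_
  · intro k hk hk'
    rw [Function.update_of_ne hk', Function.update_of_ne hk]
  · intro k hk hk'
    rw [Function.update_of_ne hk', Function.update_of_ne hk]
    exact onTT_comm_onTA n m i i' _ (fun a b c => Rcheck_central n _ a b c) k hk hk' _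
  · simp only [Function.update_self, Function.update_of_ne hne]
    rw [show x i' - x i = (x i' - v) - (x i - v) from by ring]
    exact front_ex n m i i' hne (x i - v) (x i' - v) h0 h1
      (by rw [show (x i' - v) - (x i - v) = x i' - x i from by ring]; exact ht0)
      (by rw [show (x i' - v) - (x i - v) = x i' - x i from by ring]; exact ht1)

lemma back_wrap (i i' : Fin m) (hii' : (i : ℕ) + 1 = (i' : ℕ)) (ε ρ v : ℂ) (x : Fin m → ℂ)
    (h0 : (kap n ε - x i - ρ) - v + ε ≠ 0) (h1 : (kap n ε - x i' - ρ) - v + ε ≠ 0)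
    (ht0 : x i' - x i ≠ 0) (ht1 : x i' - x i ≠ 1) :
    onTT n m i i' (RcheckA n (x i' - x i) : Matrix (Fin n × Fin n) (Fin n × Fin n) A) *
      ((List.finRange m).reverse.map (fun k => onTA n m k (RtA n
        ((kap n ε - x k - ρ) - v + ε)))).prod
    = ((List.finRange m).reverse.map (fun k => onTA n m k (RtA n
        ((kap n ε - (Function.update (Function.update x i (x i')) i' (x i)) k - ρ)
          - v + ε)))).prod *
      onTT n m i i' (RcheckA n (x i' - x i)) := by
  have hne : i ≠ i' := ne_of_succ hii'
  refine prod_swap_rev m i i' hii' _ _ _ ?_ ?_ ?_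
  · intro k hk hk'
    rw [Function.update_of_ne hk', Function.update_of_ne hk]
  · intro k hk hk'
    rw [Function.update_of_ne hk', Function.update_of_ne hk]
    exact onTT_comm_onTA n m i i' _ (fun a b c => Rcheck_central n _ a b c) k hk hk' _
  · simp only [Function.update_self, Function.update_of_ne hne]
    -- a := (kap - x i - ρ) - v + ε, b := (kap - x i' - ρ) - v + ε, a - b = x i' - x i
    rw [show x i' - x i
        = ((kap n ε - x i - ρ) - v + ε) - ((kap n ε - x i' - ρ) - v + ε) from by ring]
    exact back_ex n m i i' hne _ _ h0 h1
      (by rw [show ((kap n ε - x i - ρ) - v + ε) - ((kap n ε - x i' - ρ) - v + ε)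
          = x i' - x i from by ring]; exact ht0)
      (by rw [show ((kap n ε - x i - ρ) - v + ε) - ((kap n ε - x i' - ρ) - v + ε)
          = x i' - x i from by ring]; exact ht1)

end Wrap

section Main
variable (n m : ℕ) {A : Type*} [Ring A] [Algebra ℂ A]

lemma conjS_nestS (ε ρ : ℂ) (Am : ℂ → Matrix (Fin n) (Fin n) A) (v : ℂ) (w u : Fin m → ℂ) :
    conjS n m (nestS n m ε ρ Am v w u) =
      ((List.finRange m).map fun k => onSA n m k (RtA n (u k - v))).prod *
      ((List.finRange m).map fun k => onTA n m k (RtA n (w k - v))).prod *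
      onA n m (Am v) *
      ((List.finRange m).reverse.map fun k =>
        onTA n m k (RtA n ((kap n ε - w k - ρ) - v + ε))).prod *
      ((List.finRange m).reverse.map fun k =>
        onSA n m k (RtA n ((kap n ε - u k - ρ) - v + ε))).prod := by
  rw [nestS, conjS_mul, conjS_mul, conjS_mul, conjS_mul, conjS_prod, conjS_prod,
    conjS_prod, conjS_prod, conjS_onA]
  simp only [List.map_map, Function.comp_def, conjS_onTA, conjS_onSA]

lemma R_comm_SAprod (i i' : Fin m) (t : ℂ) (l : List (Fin m)) (F : Fin m → ℂ) :
    Commute (onTT n m i i' (RcheckA n t : Matrix (Fin n × Fin n) (Fin n × Fin n) A))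
      ((l.map fun k => onSA n m k (RtA n (F k))).prod) := by
  refine Commute.list_prod_right _ _ fun x hx => ?_
  obtain ⟨k, hk, rfl⟩ := List.mem_map.mp hx
  exact onTT_comm_onSA n m i i' _ (fun a b c => Rcheck_central n _ a b c) k _

lemma main_core (i i' : Fin m) (hii' : (i : ℕ) + 1 = (i' : ℕ)) (ε ρ : ℂ)
    (Am : ℂ → Matrix (Fin n) (Fin n) A) (v : ℂ) (w x : Fin m → ℂ)
    (h0 : x i - v ≠ 0) (h1 : x i' - v ≠ 0)
    (hb0 : (kap n ε - x i - ρ) - v + ε ≠ 0) (hb1 : (kap n ε - x i' - ρ) - v + ε ≠ 0)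
    (ht0 : x i' - x i ≠ 0) (ht1 : x i' - x i ≠ 1) :
    onTT n m i i' (RcheckA n (x i' - x i) : Matrix (Fin n × Fin n) (Fin n × Fin n) A) *
      (((List.finRange m).map fun k => onSA n m k (RtA n (w k - v))).prod *
       ((List.finRange m).map fun k => onTA n m k (RtA n (x k - v))).prod *
       onA n m (Am v) *
       ((List.finRange m).reverse.map fun k =>
         onTA n m k (RtA n ((kap n ε - x k - ρ) - v + ε))).prod *
       ((List.finRange m).reverse.map fun k =>
         onSA n m k (RtA n ((kap n ε - w k - ρ) - v + ε))).prod)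
    = (((List.finRange m).map fun k => onSA n m k (RtA n (w k - v))).prod *
       ((List.finRange m).map fun k => onTA n m k (RtA n
         ((Function.update (Function.update x i (x i')) i' (x i)) k - v))).prod *
       onA n m (Am v) *
       ((List.finRange m).reverse.map fun k =>
         onTA n m k (RtA n ((kap n ε -
           (Function.update (Function.update x i (x i')) i' (x i)) k - ρ) - v + ε))).prod *
       ((List.finRange m).reverse.map fun k =>
         onSA n m k (RtA n ((kap n ε - w k - ρ) - v + ε))).prod) *
      onTT n m i i' (RcheckA n (x i' - x i)) := by
  have hT := front_wrap n m (A := A) i i' hii' v x h0 h1 ht0 ht1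
  have hT' := back_wrap n m (A := A) i i' hii' ε ρ v x hb0 hb1 ht0 ht1
  have hS1 := R_comm_SAprod n m (A := A) i i' (x i' - x i) (List.finRange m)
    (fun k => w k - v)
  have hS2 := R_comm_SAprod n m (A := A) i i' (x i' - x i) (List.finRange m).reverse
    (fun k => (kap n ε - w k - ρ) - v + ε)
  have hA := onTT_comm_onA n m i i' (RcheckA n (x i' - x i))
    (fun a b c => Rcheck_central n _ a b c) (Am v)
  set R := onTT n m i i' (RcheckA n (x i' - x i) :
    Matrix (Fin n × Fin n) (Fin n × Fin n) A) with hRdef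
  set S1 := ((List.finRange m).map fun k => onSA n m k
    (RtA n (w k - v) : Matrix (Fin n × Fin n) (Fin n × Fin n) A)).prod with hS1def
  set S2 := ((List.finRange m).reverse.map fun k => onSA n m k
    (RtA n ((kap n ε - w k - ρ) - v + ε) :
      Matrix (Fin n × Fin n) (Fin n × Fin n) A)).prod with hS2def
  set T1 := ((List.finRange m).map fun k => onTA n m k
    (RtA n (x k - v) : Matrix (Fin n × Fin n) (Fin n × Fin n) A)).prod with hT1def
  set T2 := ((List.finRange m).map fun k => onTA n m k
    (RtA n ((Function.update (Function.update x i (x i')) i' (x i)) k - v) :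
      Matrix (Fin n × Fin n) (Fin n × Fin n) A)).prod with hT2def
  set U1 := ((List.finRange m).reverse.map fun k => onTA n m k
    (RtA n ((kap n ε - x k - ρ) - v + ε) :
      Matrix (Fin n × Fin n) (Fin n × Fin n) A)).prod with hU1def
  set U2 := ((List.finRange m).reverse.map fun k => onTA n m k
    (RtA n ((kap n ε - (Function.update (Function.update x i (x i')) i' (x i)) k - ρ)
      - v + ε) : Matrix (Fin n × Fin n) (Fin n × Fin n) A)).prod with hU2def
  set Ao := onA n m (Am v) with hAodef
  calc R * (S1 * T1 * Ao * U1 * S2)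
      = S1 * (R * T1) * Ao * U1 * S2 := by
        simp only [← mul_assoc]
        rw [hS1.eq]
    _ = S1 * (T2 * R) * Ao * U1 * S2 := by rw [hT]
    _ = S1 * T2 * (R * Ao) * U1 * S2 := by simp only [mul_assoc]
    _ = S1 * T2 * (Ao * R) * U1 * S2 := by rw [hA]
    _ = S1 * T2 * Ao * (R * U1) * S2 := by simp only [mul_assoc]
    _ = S1 * T2 * Ao * (U2 * R) * S2 := by rw [hT']
    _ = S1 * T2 * Ao * U2 * (R * S2) := by simp only [mul_assoc]
    _ = S1 * T2 * Ao * U2 * (S2 * R) := by rw [hS2.eq]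
    _ = S1 * T2 * Ao * U2 * S2 * R := by simp only [mul_assoc]

end Main

section Main2
variable (n m : ℕ) {A : Type*} [Ring A] [Algebra ℂ A]

lemma main2 (i i' : Fin m) (hii' : (i : ℕ) + 1 = (i' : ℕ)) (ε ρ : ℂ)
    (Am : ℂ → Matrix (Fin n) (Fin n) A) (v : ℂ) (w u : Fin m → ℂ)
    (h0 : u i - v ≠ 0) (h1 : u i' - v ≠ 0)
    (hb0 : (kap n ε - u i - ρ) - v + ε ≠ 0) (hb1 : (kap n ε - u i' - ρ) - v + ε ≠ 0)
    (ht0 : u i' - u i ≠ 0) (ht1 : u i' - u i ≠ 1) :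
    onTT n m i i' (RcheckA n (u i' - u i) : Matrix (Fin n × Fin n) (Fin n × Fin n) A)
        * nestS n m ε ρ Am v w u
      = nestS n m ε ρ Am v w (Function.update (Function.update u i (u i')) i' (u i)) *
        onTT n m i i' (RcheckA n (u i' - u i)) := by
  have hT := front_wrap n m (A := A) i i' hii' v u h0 h1 ht0 ht1
  have hT' := back_wrap n m (A := A) i i' hii' ε ρ v u hb0 hb1 ht0 ht1
  have hS1 := R_comm_SAprod n m (A := A) i i' (u i' - u i) (List.finRange m)
    (fun k => w k - v)
  have hS2 := R_comm_SAprod n m (A := A) i i' (u i' - u i) (List.finRange m).reverse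
    (fun k => (kap n ε - w k - ρ) - v + ε)
  have hA := onTT_comm_onA n m i i' (RcheckA n (u i' - u i))
    (fun a b c => Rcheck_central n _ a b c) (Am v)
  rw [nestS, nestS]
  set R := onTT n m i i' (RcheckA n (u i' - u i) :
    Matrix (Fin n × Fin n) (Fin n × Fin n) A) with hRdef
  set S1 := ((List.finRange m).map fun k => onSA n m k
    (RtA n (w k - v) : Matrix (Fin n × Fin n) (Fin n × Fin n) A)).prod with hS1def
  set S2 := ((List.finRange m).reverse.map fun k => onSA n m k
    (RtA n ((kap n ε - w k - ρ) - v + ε) :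
      Matrix (Fin n × Fin n) (Fin n × Fin n) A)).prod with hS2def
  set T1 := ((List.finRange m).map fun k => onTA n m k
    (RtA n (u k - v) : Matrix (Fin n × Fin n) (Fin n × Fin n) A)).prod with hT1def
  set T2 := ((List.finRange m).map fun k => onTA n m k
    (RtA n ((Function.update (Function.update u i (u i')) i' (u i)) k - v) :
      Matrix (Fin n × Fin n) (Fin n × Fin n) A)).prod with hT2def
  set U1 := ((List.finRange m).reverse.map fun k => onTA n m k
    (RtA n ((kap n ε - u k - ρ) - v + ε) :
      Matrix (Fin n × Fin n) (Fin n × Fin n) A)).prod with hU1def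
  set U2 := ((List.finRange m).reverse.map fun k => onTA n m k
    (RtA n ((kap n ε - (Function.update (Function.update u i (u i')) i' (u i)) k - ρ)
      - v + ε) : Matrix (Fin n × Fin n) (Fin n × Fin n) A)).prod with hU2def
  set Ao := onA n m (Am v) with hAodef
  calc R * (T1 * S1 * Ao * S2 * U1)
      = (R * T1) * S1 * Ao * S2 * U1 := by simp only [mul_assoc]
    _ = (T2 * R) * S1 * Ao * S2 * U1 := by rw [hT]
    _ = T2 * (R * S1) * Ao * S2 * U1 := by simp only [mul_assoc]
    _ = T2 * (S1 * R) * Ao * S2 * U1 := by rw [hS1.eq]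
    _ = T2 * S1 * (R * Ao) * S2 * U1 := by simp only [mul_assoc]
    _ = T2 * S1 * (Ao * R) * S2 * U1 := by rw [hA]
    _ = T2 * S1 * Ao * (R * S2) * U1 := by simp only [mul_assoc]
    _ = T2 * S1 * Ao * (S2 * R) * U1 := by rw [hS2.eq]
    _ = T2 * S1 * Ao * S2 * (R * U1) := by simp only [mul_assoc]
    _ = T2 * S1 * Ao * S2 * (U2 * R) := by rw [hT']
    _ = T2 * S1 * Ao * S2 * U2 * R := by simp only [mul_assoc]

lemma main3 (i i' : Fin m) (hii' : (i : ℕ) + 1 = (i' : ℕ)) (ε ρ : ℂ)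
    (Am : ℂ → Matrix (Fin n) (Fin n) A) (v : ℂ) (w u : Fin m → ℂ)
    (h0 : w i - v ≠ 0) (h1 : w i' - v ≠ 0)
    (hb0 : (kap n ε - w i - ρ) - v + ε ≠ 0) (hb1 : (kap n ε - w i' - ρ) - v + ε ≠ 0)
    (ht0 : w i' - w i ≠ 0) (ht1 : w i' - w i ≠ 1) :
    onSS n m i i' (RcheckA n (w i' - w i) : Matrix (Fin n × Fin n) (Fin n × Fin n) A)
        * nestS n m ε ρ Am v w u
      = nestS n m ε ρ Am v (Function.update (Function.update w i (w i')) i' (w i)) u *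
        onSS n m i i' (RcheckA n (w i' - w i)) := by
  have base := main_core n m (A := A) i i' hii' ε ρ Am v u w h0 h1 hb0 hb1 ht0 ht1
  have key : conjS n m (onSS n m i i'
        (RcheckA n (w i' - w i) : Matrix (Fin n × Fin n) (Fin n × Fin n) A)
        * nestS n m ε ρ Am v w u)
      = conjS n m (nestS n m ε ρ Am v
          (Function.update (Function.update w i (w i')) i' (w i)) u *
        onSS n m i i' (RcheckA n (w i' - w i))) := by
    rw [conjS_mul, conjS_mul, conjS_onSS, conjS_nestS, conjS_nestS]
    exact base
  have h2 := congrArg (conjS n m) key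
  rw [conjS_conjS, conjS_conjS] at h2
  exact h2

lemma part_i (z : Fin n) (x : ℂ) (hx : x ≠ 0) (hx1 : x - 1 ≠ 0) :
    (RcheckA n (A := ℂ) x).mulVec (fun p : Fin n × Fin n => if p = (z, z) then 1 else 0)
      = fun p : Fin n × Fin n => if p = (z, z) then 1 else 0 := by
  have hP : (PnA n (A := ℂ)).mulVec (fun p : Fin n × Fin n => if p = (z, z) then 1 else 0)
      = fun p : Fin n × Fin n => if p = (z, z) then 1 else 0 := by
    funext p
    rw [Matrix.mulVec, dotProduct]
    rw [Finset.sum_eq_single ((z, z) : Fin n × Fin n)]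
    · by_cases hp : p = (z, z)
      · subst hp; simp [PnA]
      · rw [if_neg hp]
        simp only [PnA, Matrix.of_apply]
        rw [if_neg (fun hc : p.1 = z ∧ p.2 = z =>
          hp (Prod.ext_iff.mpr ⟨hc.1, hc.2⟩)), zero_mul]
    · intro q _ hq
      rw [if_neg hq, mul_zero]
    · intro hm; exact absurd (Finset.mem_univ _) hm
  rw [Rcheck_decomp, Matrix.sub_mulVec, Matrix.smul_mulVec, Matrix.smul_mulVec,
    Matrix.one_mulVec, hP]
  funext p
  simp only [Pi.sub_apply, Pi.smul_apply, smul_eq_mul]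
  by_cases hp : p = (z, z)
  · rw [if_pos hp, mul_one, mul_one]
    field_simp
  · rw [if_neg hp, mul_zero, mul_zero, sub_zero]

end Main2
/- ===== ENDAUX ===== -/



theorem statement15 (n m : ℕ) (hn : 1 ≤ n) (hm : 2 ≤ m) (ε ρ : ℂ) (hε : ε = 1 ∨ ε = -1)
    {A : Type*} [Ring A] [Algebra ℂ A]
    (Am : ℂ → Matrix (Fin n) (Fin n) A) (v : ℂ) (w u : Fin m → ℂ)
    (hden : ∀ i : Fin m, u i - v ≠ 0 ∧ w i - v ≠ 0 ∧
      (kap n ε - w i - ρ) - v + ε ≠ 0 ∧ (kap n ε - u i - ρ) - v + ε ≠ 0) :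
    -- (i)  Ř(x) (e₁ ⊗ e₁) = e₁ ⊗ e₁
    (∀ x : ℂ, x ≠ 0 → x - 1 ≠ 0 →
      (RcheckA n (A := ℂ) x).mulVec
          (fun p : Fin n × Fin n =>
            if p = ((⟨0, by omega⟩ : Fin n), (⟨0, by omega⟩ : Fin n)) then 1 else 0)
        = fun p : Fin n × Fin n =>
            if p = ((⟨0, by omega⟩ : Fin n), (⟨0, by omega⟩ : Fin n)) then 1 else 0)
    ∧
    -- (ii)  Ř-symmetry in the ã-spaces
    (∀ i : Fin m, ∀ hi : (i : ℕ) + 1 < m,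
      u ⟨i + 1, hi⟩ - u i ≠ 0 → u ⟨i + 1, hi⟩ - u i ≠ 1 →
      onTT n m i ⟨i + 1, hi⟩ (RcheckA n (u ⟨i + 1, hi⟩ - u i)) * nestS n m ε ρ Am v w u
        = nestS n m ε ρ Am v w
            (Function.update (Function.update u i (u ⟨i + 1, hi⟩)) ⟨i + 1, hi⟩ (u i)) *
          onTT n m i ⟨i + 1, hi⟩ (RcheckA n (u ⟨i + 1, hi⟩ - u i)))
    ∧
    -- (iii)  Ř-symmetry in the a-spaces
    (∀ i : Fin m, ∀ hi : (i : ℕ) + 1 < m,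
      w ⟨i + 1, hi⟩ - w i ≠ 0 → w ⟨i + 1, hi⟩ - w i ≠ 1 →
      onSS n m i ⟨i + 1, hi⟩ (RcheckA n (w ⟨i + 1, hi⟩ - w i)) * nestS n m ε ρ Am v w u
        = nestS n m ε ρ Am v
            (Function.update (Function.update w i (w ⟨i + 1, hi⟩)) ⟨i + 1, hi⟩ (w i)) u *
          onSS n m i ⟨i + 1, hi⟩ (RcheckA n (w ⟨i + 1, hi⟩ - w i))) := by
  refine ⟨?_, ?_, ?_⟩
  · intro x hx hx1
    exact part_i n ⟨0, by omega⟩ x hx hx1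
  · intro i hi ht0 ht1
    apply main2 n m i ⟨↑i + 1, hi⟩ rfl ε ρ Am v w u
      (hden i).1 (hden ⟨↑i + 1, hi⟩).1 (hden i).2.2.2 (hden ⟨↑i + 1, hi⟩).2.2.2 ht0 ht1
  · intro i hi ht0 ht1
    apply main3 n m i ⟨↑i + 1, hi⟩ rfl ε ρ Am v w u
      (hden i).2.1 (hden ⟨↑i + 1, hi⟩).2.1 (hden i).2.2.1 (hden ⟨↑i + 1, hi⟩).2.2.1 ht0 ht1
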